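/- Let a, b ≥ 1 be integers, let S ⊆ ℂ^a and T₁ ⊆ ℂ^b be nonempty open sets, let B ≥ 2 be an integer, and let h₁,…,h_B : S × T₁ → ℂ be holomorphic. Assume: (i) for every t ∈ T₁, the functions s ↦ h₁(s,t), …, s ↦ h_{B−1}(s,t) are linearly independent over ℂ; and (ii) there is a dense subset D ⊆ T₁ such that for every t ∈ D there exist complex numbers a_{1,t},…,a_{B−1,t} with Σ_{j=1}^{B−1} a_{j,t} h_j(s,t) = h_B(s,t) for all s ∈ S. Then there exist holomorphic functions a₁,…,a_{B−1} : T₁ → ℂ such that Σ_{j=1}^{B−1} a_j(t) h_j(s,t) = h_B(s,t) for all (s,t) ∈ S × T₁. -/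

import Mathlib

noncomputable section

lemma diffOn_finset_prod {E : Type*} [NormedAddCommGroup E] [NormedSpace ℂ E]
    {ι : Type*} (s : Finset ι) (f : ι → E → ℂ) (U : Set E)
    (hf : ∀ i ∈ s, DifferentiableOn ℂ (f i) U) :
    DifferentiableOn ℂ (fun t => ∏ i ∈ s, f i t) U := by
  classical
  induction s using Finset.induction_on with
  | empty => simpa using differentiableOn_const (1 : ℂ)
  | @insert x s hx ih =>
    simp only [Finset.prod_insert hx]
    exact (hf _ (Finset.mem_insert_self _ _)).mul
      (ih fun i hi => hf i (Finset.mem_insert_of_mem hi))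

lemma diffOn_det {E : Type*} [NormedAddCommGroup E] [NormedSpace ℂ E]
    {n : ℕ} (f : Fin n → Fin n → E → ℂ) (U : Set E)
    (hf : ∀ i j, DifferentiableOn ℂ (f i j) U) :
    DifferentiableOn ℂ (fun t => Matrix.det (Matrix.of fun i j => f i j t)) U := by
  have hrw : (fun t => Matrix.det (Matrix.of fun i j => f i j t)) =
      fun t => ∑ σ : Equiv.Perm (Fin n), ((Equiv.Perm.sign σ : ℤ) : ℂ) * ∏ i, f (σ i) i t := by
    funext t
    rw [Matrix.det_apply]
    simp [Units.smul_def, zsmul_eq_mul]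
  rw [hrw]
  exact DifferentiableOn.fun_sum fun σ _ =>
    (diffOn_finset_prod _ _ _ fun i _ => hf (σ i) i).const_mul _

/-- Let `S ⊆ ℂ^a`, `T₁ ⊆ ℂ^b` be nonempty open sets and let
`h₁,…,h_{B-1}, h_B` (here `B = m + 1 ≥ 2`) be holomorphic on `S × T₁`.  Assume (i) for
every `t ∈ T₁` the functions `s ↦ h₁(s,t),…,s ↦ h_{B-1}(s,t)` are linearly independent
over `ℂ`, and (ii) on a dense subset `D ⊆ T₁` there are constants expressing
`h_B(·,t)` as a linear combination of `h₁(·,t),…,h_{B-1}(·,t)`.  Then there are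
holomorphic functions `a₁,…,a_{B-1} : T₁ → ℂ` with
`Σ_j a_j(t) h_j(s,t) = h_B(s,t)` on `S × T₁`. -/
theorem holomorphic_coefficients_from_dense_pointwise_dependence
    (a b : ℕ) (ha : 1 ≤ a) (hb : 1 ≤ b)
    (S : Set (Fin a → ℂ)) (T₁ : Set (Fin b → ℂ))
    (hS : IsOpen S) (hSne : S.Nonempty) (hT : IsOpen T₁) (hTne : T₁.Nonempty)
    (m : ℕ) (hm : 1 ≤ m)
    (h : Fin m → (Fin a → ℂ) → (Fin b → ℂ) → ℂ)
    (hB : (Fin a → ℂ) → (Fin b → ℂ) → ℂ)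
    (hhol : ∀ k, DifferentiableOn ℂ
      (fun p : (Fin a → ℂ) × (Fin b → ℂ) => h k p.1 p.2) (S ×ˢ T₁))
    (hBhol : DifferentiableOn ℂ
      (fun p : (Fin a → ℂ) × (Fin b → ℂ) => hB p.1 p.2) (S ×ˢ T₁))
    (hindep : ∀ t ∈ T₁, ∀ d : Fin m → ℂ,
      (∀ s ∈ S, ∑ k, d k * h k s t = 0) → ∀ k, d k = 0)
    (D : Set (Fin b → ℂ)) (hD : D ⊆ T₁) (hDdense : T₁ ⊆ closure D)
    (hsolve : ∀ t ∈ D, ∃ av : Fin m → ℂ, ∀ s ∈ S, ∑ j, av j * h j s t = hB s t) :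
    ∃ aCoef : Fin m → (Fin b → ℂ) → ℂ,
      (∀ j, DifferentiableOn ℂ (aCoef j) T₁) ∧
      ∀ s ∈ S, ∀ t ∈ T₁, ∑ j, aCoef j t * h j s t = hB s t := by
  classical
  -- holomorphy in the second variable with first variable fixed
  have hholt : ∀ k : Fin m, ∀ s ∈ S, DifferentiableOn ℂ (fun t => h k s t) T₁ := by
    intro k s hs
    exact (hhol k).comp
      ((differentiableOn_const s).prodMk differentiableOn_id)
      (fun t ht => Set.mk_mem_prod hs ht)
  have hBholt : ∀ s ∈ S, DifferentiableOn ℂ (fun t => hB s t) T₁ := by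
    intro s hs
    exact hBhol.comp
      ((differentiableOn_const s).prodMk differentiableOn_id)
      (fun t ht => Set.mk_mem_prod hs ht)
  -- Step 1: for each t, find m points of S making the evaluation matrix invertible
  have key : ∀ t ∈ T₁, ∃ sp : Fin m → (Fin a → ℂ), (∀ i, sp i ∈ S) ∧
      (Matrix.of fun i j => h j (sp i) t).det ≠ 0 := by
    intro t ht
    set v : (Fin a → ℂ) → (Fin m → ℂ) := fun s j => h j s t with hv
    have hspan : Submodule.span ℂ (v '' S) = ⊤ := by
      by_contra hne
      obtain ⟨f, hf0, hfmap⟩ :=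
        Submodule.exists_dual_map_eq_bot_of_lt_top (lt_top_iff_ne_top.mpr hne) inferInstance
      set d : Fin m → ℂ := fun j => f (Pi.single j 1) with hd
      have hfx : ∀ x : Fin m → ℂ, f x = ∑ j, x j * d j := by
        intro x
        have hx : x = ∑ j, Pi.single j (x j) := by
          rw [Finset.univ_sum_single]
        conv_lhs => rw [hx]
        rw [map_sum]
        refine Finset.sum_congr rfl fun j _ => ?_
        have hps : (Pi.single j (x j) : Fin m → ℂ) = x j • (Pi.single j (1 : ℂ) : Fin m → ℂ) := by
          funext j'
          simp [Pi.single_apply]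
        rw [hps, map_smul, smul_eq_mul, hd]
      have hall : ∀ s ∈ S, ∑ k, d k * h k s t = 0 := by
        intro s hs
        have hvs : f (v s) = 0 := by
          have hmem : f (v s) ∈ Submodule.map f (Submodule.span ℂ (v '' S)) :=
            Submodule.mem_map_of_mem (Submodule.subset_span ⟨s, hs, rfl⟩)
          rw [hfmap] at hmem
          simpa using hmem
        calc ∑ k, d k * h k s t = ∑ k, v s k * d k := by
              refine Finset.sum_congr rfl fun k _ => ?_
              rw [hv]; ring
          _ = f (v s) := (hfx _).symm
          _ = 0 := hvs
      have hd0 := hindep t ht d hall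
      apply hf0
      apply LinearMap.ext
      intro x
      simp [hfx x, hd0]
    obtain ⟨bs, hbsub, hbspan, hbind⟩ := exists_linearIndependent ℂ (v '' S)
    rw [hspan] at hbspan
    let Bb : Module.Basis bs ℂ (Fin m → ℂ) := Module.Basis.mk hbind (by rw [Subtype.range_coe, hbspan])
    haveI : Fintype bs := FiniteDimensional.fintypeBasisIndex Bb
    have hcard : Fintype.card bs = m := by
      have h1 := Module.finrank_eq_card_basis Bb
      rw [Module.finrank_fin_fun] at h1
      omega
    let e : Fin m ≃ bs := (Fintype.equivFinOfCardEq hcard).symm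
    have hsel : ∀ i : Fin m, ∃ s, s ∈ S ∧ v s = (e i : Fin m → ℂ) := by
      intro i
      obtain ⟨s, hs, hvs⟩ := hbsub (e i).2
      exact ⟨s, hs, hvs⟩
    choose sp hspS hspv using hsel
    refine ⟨sp, hspS, ?_⟩
    have hrows : LinearIndependent ℂ
        (fun i => (Matrix.of fun i j => h j (sp i) t) i) := by
      have hre : (fun i : Fin m => (Matrix.of fun i j => h j (sp i) t) i) =
          fun i => (Bb.reindex e.symm) i := by
        funext i
        have h1 : (Matrix.of fun i j => h j (sp i) t) i = v (sp i) := rfl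
        rw [h1, hspv i, Module.Basis.reindex_apply, Equiv.symm_symm, Module.Basis.mk_apply]
      rw [hre]
      exact (Bb.reindex e.symm).linearIndependent
    have hunit := Matrix.linearIndependent_rows_iff_isUnit.mp hrows
    exact ((Matrix.isUnit_iff_isUnit_det _).mp hunit).ne_zero
  -- Step 2: uniqueness of coefficients
  have uniq : ∀ t ∈ T₁, ∀ c d : Fin m → ℂ,
      (∀ s ∈ S, ∑ j, c j * h j s t = hB s t) →
      (∀ s ∈ S, ∑ j, d j * h j s t = hB s t) → c = d := by
    intro t ht c d hc hd
    have h0 := hindep t ht (c - d) (fun s hs => by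
      simp only [Pi.sub_apply, sub_mul, Finset.sum_sub_distrib]
      rw [hc s hs, hd s hs, sub_self])
    funext j
    have := h0 j
    simp only [Pi.sub_apply] at this
    exact sub_eq_zero.mp this
  -- Step 3: local holomorphic solutions
  have loc : ∀ t₀ ∈ T₁, ∃ U : Set (Fin b → ℂ), IsOpen U ∧ t₀ ∈ U ∧ U ⊆ T₁ ∧
      ∃ g : Fin m → (Fin b → ℂ) → ℂ, (∀ j, DifferentiableOn ℂ (g j) U) ∧
        ∀ t ∈ U, ∀ s ∈ S, ∑ j, g j t * h j s t = hB s t := by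
    intro t₀ ht₀
    obtain ⟨sp, hspS, hdet⟩ := key t₀ ht₀
    set M : (Fin b → ℂ) → Matrix (Fin m) (Fin m) ℂ :=
      fun t => Matrix.of fun i j => h j (sp i) t with hM
    have hMdiff : DifferentiableOn ℂ (fun t => (M t).det) T₁ :=
      diffOn_det (fun i j t => h j (sp i) t) T₁ (fun i j => hholt j (sp i) (hspS i))
    set U : Set (Fin b → ℂ) := T₁ ∩ (fun t => (M t).det) ⁻¹' {x | x ≠ 0} with hU
    have hUopen : IsOpen U :=
      hMdiff.continuousOn.isOpen_inter_preimage hT isOpen_ne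
    have ht₀U : t₀ ∈ U := ⟨ht₀, hdet⟩
    have hUsub : U ⊆ T₁ := Set.inter_subset_left
    have hdetU : ∀ t ∈ U, (M t).det ≠ 0 := fun t htu => htu.2
    set c : (Fin b → ℂ) → (Fin m → ℂ) := fun t i => hB (sp i) t with hc
    set g : Fin m → (Fin b → ℂ) → ℂ :=
      fun j t => Matrix.cramer (M t) (c t) j / (M t).det with hg
    -- holomorphy of g on U
    have hgdiff : ∀ j, DifferentiableOn ℂ (g j) U := by
      intro j
      have hnum : DifferentiableOn ℂ (fun t => Matrix.cramer (M t) (c t) j) T₁ := by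
        have hrw : (fun t => Matrix.cramer (M t) (c t) j) = fun t =>
            Matrix.det (Matrix.of fun i j' =>
              (fun i j' t => if j' = j then hB (sp i) t else h j' (sp i) t) i j' t) := by
          funext t
          rw [Matrix.cramer_apply]
          congr 1
          ext i j'
          simp [Matrix.updateCol_apply, hM, hc]
        rw [hrw]
        refine diffOn_det _ _ ?_
        intro i j'
        by_cases hjj : j' = j
        · simpa [hjj] using hBholt (sp i) (hspS i)
        · simpa [hjj] using hholt j' (sp i) (hspS i)
      show DifferentiableOn ℂ (fun t => Matrix.cramer (M t) (c t) j / (M t).det) U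
      simp_rw [div_eq_mul_inv]
      exact (hnum.mono hUsub).mul ((hMdiff.mono hUsub).inv hdetU)
    -- g solves the m×m linear system on U
    have hmul : ∀ t ∈ U, (M t).mulVec (fun j => g j t) = c t := by
      intro t htu
      have h1 : (fun j => g j t) = ((M t).det)⁻¹ • Matrix.cramer (M t) (c t) := by
        funext j
        simp [hg, div_eq_inv_mul]
      rw [h1, Matrix.mulVec_smul, Matrix.mulVec_cramer, smul_smul,
        inv_mul_cancel₀ (hdetU t htu), one_smul]
    -- g solves the full system on U ∩ D
    have hUD : ∀ t ∈ U ∩ D, ∀ s ∈ S, ∑ j, g j t * h j s t = hB s t := by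
      rintro t ⟨htu, htd⟩
      obtain ⟨av, hav⟩ := hsolve t htd
      have h2 : (M t).mulVec av = c t := by
        funext i
        have := hav (sp i) (hspS i)
        simp only [Matrix.mulVec, dotProduct, hM, hc, Matrix.of_apply]
        rw [← this]
        exact Finset.sum_congr rfl fun j _ => mul_comm _ _
      have hinj : Function.Injective (M t).mulVec :=
        Matrix.mulVec_injective_iff_isUnit.mpr
          ((Matrix.isUnit_iff_isUnit_det _).mpr (isUnit_iff_ne_zero.mpr (hdetU t htu)))
      have hge : (fun j => g j t) = av := hinj (by rw [hmul t htu, h2])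
      intro s hs
      calc ∑ j, g j t * h j s t = ∑ j, av j * h j s t := by
            refine Finset.sum_congr rfl fun j _ => ?_
            rw [congrFun hge j]
        _ = hB s t := hav s hs
    refine ⟨U, hUopen, ht₀U, hUsub, g, hgdiff, ?_⟩
    -- extend from U ∩ D to U by continuity and density
    intro t htu s hs
    set φ : (Fin b → ℂ) → ℂ := fun t => (∑ j, g j t * h j s t) - hB s t with hφ
    have hφcont : ContinuousOn φ U := by
      apply ContinuousOn.sub
      · exact continuousOn_finset_sum _ fun j _ =>
          ((hgdiff j).continuousOn.mul ((hholt j s hs).continuousOn.mono hUsub))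
      · exact (hBholt s hs).continuousOn.mono hUsub
    have htc : t ∈ closure (U ∩ D) := by
      rw [mem_closure_iff]
      intro O hO htO
      have hclD : t ∈ closure D := hDdense (hUsub htu)
      rw [mem_closure_iff] at hclD
      obtain ⟨y, hy1, hy2⟩ := hclD (O ∩ U) (hO.inter hUopen) ⟨htO, htu⟩
      exact ⟨y, hy1.1, hy1.2, hy2⟩
    have hφt : φ t = 0 := by
      haveI : (nhdsWithin t (U ∩ D)).NeBot := mem_closure_iff_nhdsWithin_neBot.mp htc
      have h1 : ContinuousAt φ t := (hφcont.continuousAt (hUopen.mem_nhds htu))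
      have h2 : Filter.Tendsto φ (nhdsWithin t (U ∩ D)) (nhds (φ t)) :=
        h1.tendsto.mono_left nhdsWithin_le_nhds
      have h3 : Filter.Tendsto φ (nhdsWithin t (U ∩ D)) (nhds 0) := by
        refine Filter.Tendsto.congr' ?_ tendsto_const_nhds
        filter_upwards [self_mem_nhdsWithin] with y hy
        exact (sub_eq_zero.mpr (hUD y hy s hs)).symm
      exact tendsto_nhds_unique h2 h3
    exact sub_eq_zero.mp hφt
  -- Step 4: globalize by uniqueness
  have ex : ∀ t, t ∈ T₁ → ∃ cvec : Fin m → ℂ, ∀ s ∈ S, ∑ j, cvec j * h j s t = hB s t := by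
    intro t ht
    obtain ⟨U, _, htU, _, g, _, hgsol⟩ := loc t ht
    exact ⟨fun j => g j t, hgsol t htU⟩
  set sol : (Fin b → ℂ) → (Fin m → ℂ) := fun t =>
    if ht : t ∈ T₁ then Classical.choose (ex t ht) else 0 with hsol
  have hsolspec : ∀ t (ht : t ∈ T₁), ∀ s ∈ S, ∑ j, sol t j * h j s t = hB s t := by
    intro t ht s hs
    have : sol t = Classical.choose (ex t ht) := by rw [hsol]; simp [ht]
    rw [this]
    exact Classical.choose_spec (ex t ht) s hs
  refine ⟨fun j t => sol t j, ?_, fun s hs t ht => hsolspec t ht s hs⟩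
  intro j t ht
  obtain ⟨U, hUopen, htU, hUsub, g, hgdiff, hgsol⟩ := loc t ht
  have heq : ∀ y ∈ U, sol y j = g j y := by
    intro y hy
    have h1 : sol y = fun j' => g j' y :=
      uniq y (hUsub hy) (sol y) (fun j' => g j' y)
        (fun s hs => hsolspec y (hUsub hy) s hs) (hgsol y hy)
    exact congrFun h1 j
  have hgAt : DifferentiableAt ℂ (g j) t :=
    (hgdiff j).differentiableAt (hUopen.mem_nhds htU)
  have : DifferentiableAt ℂ (fun t => sol t j) t := by
    apply hgAt.congr_of_eventuallyEq
    filter_upwards [hUopen.mem_nhds htU] with y hy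
    exact heq y hy
  exact this.differentiableWithinAt

end
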